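/- Let (V, s, t, c) be a flow network and let f be a maximum flow. Then S_f ∩ T_f = ∅; consequently the three sets S_f, T_f and U_f are pairwise disjoint and their union is V, i.e., they form a partition of the vertex set. -/

import Mathlib

open scoped Classical

/-- A flow network: a finite vertex type with a source `s`, a sink `t` and a
capacity function `c` with no self-loops, no edges into `s` and no edges out of `t`. -/
structure FlowNet (V : Type) [Fintype V] where
  s : V
  t : V
  hst : s ≠ t
  c : V → V → ℕ
  c_self : ∀ v, c v v = 0
  c_to_s : ∀ v, c v s = 0
  c_from_t : ∀ v, c t v = 0

namespace FlowNet

variable {V : Type} [Fintype V]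

/-- `f` is a flow: capacity-respecting and conserving flow at all internal vertices. -/
def IsFlow (N : FlowNet V) (f : V → V → ℕ) : Prop :=
  (∀ u v, f u v ≤ N.c u v) ∧
  ∀ v, v ≠ N.s → v ≠ N.t → (∑ u, f u v) = ∑ u, f v u

/-- The value of a flow: total flow out of the source. -/
def value (N : FlowNet V) (f : V → V → ℕ) : ℕ := ∑ v, f N.s v

/-- `f` is a maximum flow. -/
def IsMaxFlow (N : FlowNet V) (f : V → V → ℕ) : Prop :=
  N.IsFlow f ∧ ∀ f', N.IsFlow f' → N.value f' ≤ N.value f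

/-- Edge of the residual graph of `f`. -/
def ResEdge (N : FlowNet V) (f : V → V → ℕ) (u v : V) : Prop :=
  f u v < N.c u v ∨ 0 < f v u

/-- `S_f`: vertices reachable from `s` in the residual graph of `f`. -/
def Sset (N : FlowNet V) (f : V → V → ℕ) : Set V :=
  {v | Relation.ReflTransGen (N.ResEdge f) N.s v}

/-- `T_f`: vertices from which `t` is reachable in the residual graph of `f`. -/
def Tset (N : FlowNet V) (f : V → V → ℕ) : Set V :=
  {v | Relation.ReflTransGen (N.ResEdge f) v N.t}

/-- `U_f`: all remaining vertices. -/
def Uset (N : FlowNet V) (f : V → V → ℕ) : Set V :=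
  (N.Sset f ∪ N.Tset f)ᶜ

/-- An s-t cut: a set of vertices containing `s` but not `t`. -/
def IsCut (N : FlowNet V) (X : Set V) : Prop :=
  N.s ∈ X ∧ N.t ∉ X

/-- The capacity of a cut. -/
noncomputable def cap (N : FlowNet V) (X : Set V) : ℕ :=
  ∑ u, ∑ v, if u ∈ X ∧ v ∉ X then N.c u v else 0

/-- A minimum s-t cut. -/
def IsMinCut (N : FlowNet V) (X : Set V) : Prop :=
  N.IsCut X ∧ ∀ Y, N.IsCut Y → N.cap X ≤ N.cap Y

end FlowNet


section ChainAux

variable {α : Type*}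

lemma chain_mono_mem {R R' : α → α → Prop} :
    ∀ {l : List α} {a : α}, List.Chain R a l →
      (∀ x y, x ∈ a :: l → y ∈ l → R x y → R' x y) → List.Chain R' a l
  | [], _, _, _ => List.Chain.nil
  | b :: l, a, h, hm => by
      unfold List.Chain at h ⊢
      rw [List.chain_cons] at h ⊢
      refine ⟨hm a b (by simp) (by simp) h.1, chain_mono_mem h.2 ?_⟩
      intro x y hx hy hr
      exact hm x y (by simp at hx ⊢; tauto) (by simp [hy]) hr

lemma exists_nodup_chain {R : α → α → Prop} :
    ∀ (n : ℕ) (l : List α), l.length ≤ n → ∀ a, List.Chain R a l →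
    ∃ l', l' ⊆ l ∧ (a :: l').Nodup ∧ List.Chain R a l' ∧
      (a :: l').getLast? = (a :: l).getLast? := by
  intro n
  induction n with
  | zero =>
      intro l hl a _
      have hnil : l = [] := List.length_eq_zero_iff.mp (Nat.le_zero.mp hl)
      subst hnil
      exact ⟨[], by simp, by simp, List.Chain.nil, rfl⟩
  | succ n ih =>
      intro l hl a h
      by_cases ha : a ∈ l
      · obtain ⟨l1, l2, rfl⟩ := List.append_of_mem ha
        unfold List.Chain at h
        rw [List.isChain_cons_split] at h
        have h2 : l2.length ≤ n := by
          have := hl; simp [List.length_append] at this; omega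
        obtain ⟨l', hsub, hnd, hch, hlast⟩ := ih l2 h2 a h.2
        refine ⟨l', fun x hx => List.mem_append.mpr (Or.inr (List.mem_cons_of_mem _ (hsub hx))),
          hnd, hch, ?_⟩
        rw [hlast]
        have h3 : a :: (l1 ++ a :: l2) = (a :: l1) ++ (a :: l2) := by simp
        have h4 : ((a :: l1) ++ (a :: l2)).getLast? = (a :: l2).getLast? := by
          rw [List.getLast?_append, List.getLast?_eq_getLast (l := a :: l2) (by simp)]
          simp
        rw [h3, h4]
      · match l, hl, h with
        | [], _, _ => exact ⟨[], by simp, by simp, List.Chain.nil, rfl⟩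
        | b :: lb, hl, h => 
          unfold List.Chain at h
          rw [List.chain_cons] at h
          obtain ⟨l'', hsub, hnd, hch, hlast⟩ := ih lb (by simp at hl; omega) b h.2
          refine ⟨b :: l'', ?_, ?_, List.chain_cons.mpr ⟨h.1, hch⟩, ?_⟩
          · intro x hx
            rcases List.mem_cons.mp hx with rfl | hx
            · simp
            · exact List.mem_cons_of_mem _ (hsub hx)
          · rw [List.nodup_cons]
            refine ⟨fun hmem => ha ?_, hnd⟩
            rcases List.mem_cons.mp hmem with rfl | hmem
            · simp
            · exact List.mem_cons_of_mem _ (hsub hmem)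
          · rw [List.getLast?_cons_cons, List.getLast?_cons_cons, hlast]

end ChainAux

section AugArg

namespace FlowNet

variable {V : Type} [Fintype V]

/-- Signed excess of `g` at a vertex. -/
def Ex (N : FlowNet V) (g : V → V → ℕ) (w : V) : ℤ :=
  ∑ u, ((g u w : ℤ) - g w u)

lemma aug_step (N : FlowNet V) (g : V → V → ℕ) (hg : ∀ a b, g a b ≤ N.c a b)
    {v u : V} (hvu : v ≠ u) (he : N.ResEdge g v u) :
    ∃ g1 : V → V → ℕ, (∀ a b, g1 a b ≤ N.c a b) ∧
      (∀ a b, a ≠ v → b ≠ v → g1 a b = g a b) ∧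
      (∀ w, N.Ex g1 w = N.Ex g w + (if w = u then 1 else 0) - (if w = v then 1 else 0)) := by
  rcases Classical.em (g v u < N.c v u) with hfwd | hbwd
  · refine ⟨fun a b => if a = v ∧ b = u then g a b + 1 else g a b, ?_, ?_, ?_⟩
    · intro a b
      by_cases h : a = v ∧ b = u
      · obtain ⟨rfl, rfl⟩ := h
        beta_reduce
        rw [if_pos ⟨rfl, rfl⟩]
        omega
      · simp [h, hg a b]
    · intro a b ha _; simp [ha]
    · intro w
      have key : ∀ a b : V,
          ((if a = v ∧ b = u then g a b + 1 else g a b : ℕ) : ℤ)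
            = (g a b : ℤ) + (if a = v ∧ b = u then 1 else 0) := by
        intro a b; by_cases h : a = v ∧ b = u <;> simp [h]
      simp only [Ex, key]
      have expand : ∀ x : V,
          (g x w : ℤ) + (if x = v ∧ w = u then 1 else 0)
            - ((g w x : ℤ) + (if w = v ∧ x = u then 1 else 0))
          = ((g x w : ℤ) - g w x)
            + ((if x = v ∧ w = u then (1:ℤ) else 0) - (if w = v ∧ x = u then (1:ℤ) else 0)) := by
        intro x; ring
      simp only [expand, Finset.sum_add_distrib, Finset.sum_sub_distrib]
      by_cases hw : w = u <;> by_cases hw' : w = v <;>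
        simp [hw, hw', hvu, Ne.symm hvu, Finset.sum_ite_eq, Finset.sum_ite_eq'] <;> ring
  · have hpos : 0 < g u v := by
      rcases he with h | h
      · exact absurd h hbwd
      · exact h
    refine ⟨fun a b => if a = u ∧ b = v then g a b - 1 else g a b, ?_, ?_, ?_⟩
    · intro a b
      by_cases h : a = u ∧ b = v
      · obtain ⟨rfl, rfl⟩ := h
        beta_reduce
        rw [if_pos ⟨rfl, rfl⟩]
        exact le_trans (Nat.sub_le _ _) (hg _ _)
      · simp [h, hg a b]
    · intro a b _ hb; simp [hb]
    · intro w
      have key : ∀ a b : V,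
          ((if a = u ∧ b = v then g a b - 1 else g a b : ℕ) : ℤ)
            = (g a b : ℤ) - (if a = u ∧ b = v then 1 else 0) := by
        intro a b
        by_cases h : a = u ∧ b = v
        · obtain ⟨rfl, rfl⟩ := h
          simp only [and_self, if_true]
          omega
        · simp [h]
      simp only [Ex, key]
      have expand : ∀ x : V,
          (g x w : ℤ) - (if x = u ∧ w = v then 1 else 0)
            - ((g w x : ℤ) - (if w = u ∧ x = v then 1 else 0))
          = ((g x w : ℤ) - g w x)
            + ((if w = u ∧ x = v then (1:ℤ) else 0) - (if x = u ∧ w = v then (1:ℤ) else 0)) := by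
        intro x; ring
      simp only [expand, Finset.sum_add_distrib, Finset.sum_sub_distrib]
      by_cases hw : w = u <;> by_cases hw' : w = v <;>
        simp [hw, hw', hvu, Ne.symm hvu, Finset.sum_ite_eq, Finset.sum_ite_eq'] <;> ring

/-- Augmenting along a duplicate-free residual path. -/
lemma aug (N : FlowNet V) : ∀ (l : List V) (g : V → V → ℕ) (v : V),
    (∀ a b, g a b ≤ N.c a b) → List.Chain (N.ResEdge g) v l → (v :: l).Nodup →
    (v :: l).getLast? = some N.t →
    ∃ g', (∀ a b, g' a b ≤ N.c a b) ∧
      ∀ w, N.Ex g' w = N.Ex g w + (if w = N.t then 1 else 0) - (if w = v then 1 else 0)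
  | [], g, v, hg, _, _, hlast => by
      simp only [List.getLast?_singleton, Option.some_inj] at hlast
      subst hlast
      exact ⟨g, hg, fun w => by ring⟩
  | u :: l', g, v, hg, hch, hnd, hlast => by
      unfold List.Chain at hch
      rw [List.chain_cons] at hch
      have hvnot : v ∉ u :: l' := (List.nodup_cons.mp hnd).1
      have hvu : v ≠ u := fun h => hvnot (h ▸ List.mem_cons_self)
      obtain ⟨g1, hg1c, hg1eq, hg1Ex⟩ := N.aug_step g hg hvu hch.1
      have hch1 : List.Chain (N.ResEdge g1) u l' := by
        refine chain_mono_mem hch.2 ?_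
        intro x y hx hy hr
        have hxv : x ≠ v := fun h => hvnot (h ▸ hx)
        have hyv : y ≠ v := fun h => hvnot (h ▸ List.mem_cons_of_mem _ hy)
        unfold ResEdge at hr ⊢
        rw [hg1eq x y hxv hyv, hg1eq y x hyv hxv]
        exact hr
      obtain ⟨g', hgc', hEx'⟩ := N.aug l' g1 u hg1c hch1 (List.nodup_cons.mp hnd).2
        (by rw [List.getLast?_cons_cons] at hlast; exact hlast)
      refine ⟨g', hgc', fun w => ?_⟩
      rw [hEx' w, hg1Ex w]
      ring

lemma Ex_source (N : FlowNet V) (g : V → V → ℕ) (hg : ∀ a b, g a b ≤ N.c a b) :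
    N.Ex g N.s = -(N.value g : ℤ) := by
  have h0 : ∀ u, g u N.s = 0 := fun u => Nat.le_zero.mp (N.c_to_s u ▸ hg u N.s)
  unfold Ex value
  rw [Finset.sum_sub_distrib]
  simp [h0]

end FlowNet

end AugArg

/-- for a maximum flow `f`, `S_f ∩ T_f = ∅`; consequently `S_f`, `T_f`
and `U_f` are pairwise disjoint and their union is the whole vertex set. -/
theorem stmt2 {V : Type} [Fintype V] (N : FlowNet V) (f : V → V → ℕ)
    (hf : N.IsMaxFlow f) :
    N.Sset f ∩ N.Tset f = ∅ ∧
      N.Sset f ∩ N.Uset f = ∅ ∧ N.Tset f ∩ N.Uset f = ∅ ∧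
      N.Sset f ∪ N.Tset f ∪ N.Uset f = Set.univ := by
  have hST : N.Sset f ∩ N.Tset f = ∅ := by
    rw [Set.eq_empty_iff_forall_notMem]
    rintro v ⟨hvS, hvT⟩
    have hpath : Relation.ReflTransGen (N.ResEdge f) N.s N.t := hvS.trans hvT
    obtain ⟨l0, hch0, hlast0⟩ := List.exists_isChain_cons_of_relationReflTransGen hpath
    have hlast0' : (N.s :: l0).getLast? = some N.t := by
      rw [List.getLast?_eq_getLast (l := N.s :: l0) (List.cons_ne_nil _ _), hlast0]
    obtain ⟨l, -, hnd, hch, hlast⟩ := exists_nodup_chain l0.length l0 le_rfl N.s hch0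
    obtain ⟨g', hgc', hEx'⟩ := N.aug l f N.s hf.1.1 hch hnd (hlast.trans hlast0')
    have hf0 : ∀ w, w ≠ N.s → w ≠ N.t → N.Ex f w = 0 := by
      intro w hw1 hw2
      unfold FlowNet.Ex
      rw [Finset.sum_sub_distrib, ← Nat.cast_sum, ← Nat.cast_sum, hf.1.2 w hw1 hw2, sub_self]
    have hflow' : N.IsFlow g' := by
      refine ⟨hgc', fun w hw1 hw2 => ?_⟩
      have h := hEx' w
      rw [hf0 w hw1 hw2, if_neg hw2, if_neg hw1] at h
      simp only [add_zero, sub_zero] at h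
      unfold FlowNet.Ex at h
      rw [Finset.sum_sub_distrib, ← Nat.cast_sum, ← Nat.cast_sum] at h
      exact_mod_cast sub_eq_zero.mp h
    have hv : N.Ex g' N.s = N.Ex f N.s - 1 := by
      have h := hEx' N.s
      rw [if_neg N.hst, if_pos rfl] at h
      linarith
    have hval : (N.value g' : ℤ) = (N.value f : ℤ) + 1 := by
      have h1 := N.Ex_source f hf.1.1
      have h2 := N.Ex_source g' hgc'
      rw [h1, h2] at hv
      linarith
    have hle : (N.value g' : ℤ) ≤ (N.value f : ℤ) := by exact_mod_cast hf.2 g' hflow'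
    linarith
  refine ⟨hST, ?_, ?_, ?_⟩
  · ext x; simp only [FlowNet.Uset, Set.mem_inter_iff, Set.mem_compl_iff, Set.mem_union,
      Set.mem_empty_iff_false, iff_false]; tauto
  · ext x; simp only [FlowNet.Uset, Set.mem_inter_iff, Set.mem_compl_iff, Set.mem_union,
      Set.mem_empty_iff_false, iff_false]; tauto
  · ext x; simp only [FlowNet.Uset, Set.mem_union, Set.mem_compl_iff, Set.mem_univ,
      iff_true]; tauto
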